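/- Let A be a finite dimensional hereditary algebra and let X, Y be indecomposable A-modules with Ext¹_A(X,Y) = 0. Then every nonzero homomorphism Y → X is either injective or surjective. In particular, if X is an exceptional module (indecomposable with Ext¹_A(X,X) = 0), then End_A(X) is a division algebra. -/

import Mathlib

/-- A module is indecomposable if it is nonzero and admits no nontrivial direct sum
decomposition. -/
def Indecomposable' (A : Type) [Ring A] (M : Type) [AddCommGroup M] [Module A M] : Prop :=
  (∃ m : M, m ≠ 0) ∧ ∀ U V : Submodule A M, IsCompl U V → U = ⊥ ∨ V = ⊥

/-- `Ext¹_A(X,Y) = 0`: every short exact sequence `0 → Y → E → X → 0` splits. -/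
def Ext1Zero (A : Type) [Ring A] (X Y : Type) [AddCommGroup X] [Module A X]
    [AddCommGroup Y] [Module A Y] : Prop :=
  ∀ (E : Type) [AddCommGroup E] [Module A E] (ι : Y →ₗ[A] E) (g : E →ₗ[A] X),
    Function.Injective ι → Function.Surjective g → LinearMap.range ι = LinearMap.ker g →
    ∃ s : X →ₗ[A] E, g.comp s = LinearMap.id

section Aux


variable {A : Type} [Ring A]

/-- A subsingleton module is projective. -/
theorem HR.projective_of_subsingleton (M : Type) [AddCommGroup M] [Module A M]
    [Subsingleton M] : Module.Projective A M :=
  Module.Projective.of_split (0 : M →ₗ[A] A) 0 (by ext m; exact Subsingleton.elim _ _)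

/-- If the kernel and range of a linear map are projective, so is the source. -/
theorem HR.projective_of_ker_range {M N : Type} [AddCommGroup M] [Module A M]
    [AddCommGroup N] [Module A N] (φ : M →ₗ[A] N)
    (hK : Module.Projective A (LinearMap.ker φ))
    (hI : Module.Projective A (LinearMap.range φ)) :
    Module.Projective A M := by
  haveI := hK; haveI := hI
  obtain ⟨σ, hσ⟩ := Module.projective_lifting_property φ.rangeRestrict LinearMap.id
    φ.surjective_rangeRestrict
  have hφσ : ∀ r : LinearMap.range φ, φ (σ r) = (r : N) := by
    intro r
    have := congrArg (fun t => ((t r : LinearMap.range φ) : N)) hσ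
    simpa using this
  set τ : M →ₗ[A] M := LinearMap.id - σ.comp φ.rangeRestrict with hτ
  have hmem : ∀ m : M, τ m ∈ LinearMap.ker φ := by
    intro m
    simp only [hτ, LinearMap.mem_ker, LinearMap.sub_apply, LinearMap.id_apply, map_sub,
      LinearMap.comp_apply, hφσ]
    simp [LinearMap.rangeRestrict]
  refine Module.Projective.of_split
    (M := (LinearMap.ker φ) × (LinearMap.range φ))
    (LinearMap.prod (τ.codRestrict (LinearMap.ker φ) hmem) φ.rangeRestrict)
    ((LinearMap.ker φ).subtype.comp (LinearMap.fst A _ _) + σ.comp (LinearMap.snd A _ _)) ?_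
  ext m
  simp [hτ]

/-- Over a ring all of whose left ideals are projective, every submodule of a finite
free module is projective. -/
theorem HR.submodule_pi_projective (hhered : ∀ I : Submodule A A, Module.Projective A I) :
    ∀ (n : ℕ) (M : Submodule A (Fin n → A)), Module.Projective A M := by
  intro n
  induction n with
  | zero =>
      intro M
      haveI : Subsingleton M := ⟨fun a b => Subtype.ext (Subsingleton.elim _ _)⟩
      exact HR.projective_of_subsingleton M
  | succ n ih =>
      intro M
      set φ : M →ₗ[A] A := (LinearMap.proj (Fin.last n)).comp M.subtype with hφ
      set ψ : LinearMap.ker φ →ₗ[A] (Fin n → A) :=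
        (LinearMap.funLeft A A Fin.castSucc).comp
          (M.subtype.comp (LinearMap.ker φ).subtype) with hψ
      have hinj : Function.Injective ψ := by
        intro x y hxy
        ext i
        refine Fin.lastCases ?_ ?_ i
        · have hx : (((x : M) : Fin (n+1) → A)) (Fin.last n) = 0 := x.2
          have hy : (((y : M) : Fin (n+1) → A)) (Fin.last n) = 0 := y.2
          rw [hx, hy]
        · intro j
          have := congrFun hxy j
          simpa [hψ, LinearMap.funLeft] using this
      have hker : Module.Projective A (LinearMap.ker φ) :=
        Module.Projective.of_equiv (LinearEquiv.ofInjective ψ hinj).symm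
      exact HR.projective_of_ker_range φ hker (hhered _)

section Local

variable {k : Type} [Field k] {A : Type} [Ring A] [Algebra k A]

/-- Fitting-style dichotomy: an endomorphism of a finite-dimensional indecomposable
module is bijective, or `1 - h` is bijective. -/
theorem HR.local_endo {X : Type} [AddCommGroup X] [Module A X]
    [Module k X] [IsScalarTower k A X] [FiniteDimensional k X]
    (hX : Indecomposable' A X) (h : X →ₗ[A] X) :
    Function.Bijective h ∨ Function.Bijective ((LinearMap.id : X →ₗ[A] X) - h) := by
  haveI : IsNoetherian A X := isNoetherian_of_tower k inferInstance
  haveI : IsArtinian A X := isArtinian_of_tower k inferInstance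
  obtain ⟨n, hn, hn1⟩ :=
    ((h.eventually_isCompl_ker_pow_range_pow).and (Filter.eventually_gt_atTop 0)).exists
  rcases hX.2 _ _ hn with hk | hr
  · left
    have hinj : Function.Injective h := by
      have hle : LinearMap.ker h ≤ LinearMap.ker (h ^ n) := by
        conv_rhs => rw [← Nat.succ_pred_eq_of_pos hn1, pow_succ]
        rw [Module.End.mul_eq_comp]
        exact LinearMap.ker_le_ker_comp _ _
      rw [← LinearMap.ker_eq_bot]
      exact le_bot_iff.mp (hk ▸ hle)
    exact IsArtinian.bijective_of_injective_endomorphism h hinj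
  · right
    have hnil : IsNilpotent h := by
      refine ⟨n, ?_⟩
      have : ∀ x, (h ^ n) x = 0 := by
        intro x
        have : (h ^ n) x ∈ LinearMap.range (h ^ n) := LinearMap.mem_range_self _ x
        rw [hr] at this
        simpa using this
      ext x; simpa using this x
    have hu : IsUnit (1 - h) := hnil.isUnit_one_sub
    have := (Module.End.isUnit_iff (1 - h)).mp hu
    exact this

end Local

theorem HR.key (k : Type) [Field k] (A : Type) [Ring A] [Algebra k A]
    (hhered : ∀ I : Submodule A A, Module.Projective A I)
    (X Y : Type) [AddCommGroup X] [Module A X] [AddCommGroup Y] [Module A Y]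
    [Module k X] [IsScalarTower k A X] [FiniteDimensional k X]
    [Module k Y] [IsScalarTower k A Y] [FiniteDimensional k Y]
    (hX : Indecomposable' A X) (hY : Indecomposable' A Y)
    (hext : Ext1Zero A X Y) (f : Y →ₗ[A] X) (hf : f ≠ 0) :
    Function.Injective f ∨ Function.Surjective f := by
  by_contra hcon
  push_neg at hcon
  obtain ⟨hninj, hnsurj⟩ := hcon
  classical
  set Z := LinearMap.range f with hZ
  set p : Y →ₗ[A] Z := f.rangeRestrict with hpdef
  set i : Z →ₗ[A] X := Z.subtype with hidef
  have hip : ∀ y, i (p y) = f y := fun y => rfl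
  set q : X →ₗ[A] X ⧸ Z := Z.mkQ with hqdef
  have hqi : ∀ z : Z, q (i z) = 0 := by
    intro z
    simp [hqdef, hidef, Submodule.Quotient.mk_eq_zero]
  -- a finite presentation of C = X ⧸ Z
  haveI : Module.Finite A X := Module.Finite.of_restrictScalars_finite k A X
  obtain ⟨n, sgen, hsgen⟩ := Module.Finite.exists_fin (R := A) (M := X ⧸ Z)
  set π : (Fin n → A) →ₗ[A] (X ⧸ Z) := Fintype.linearCombination A sgen with hπdef
  have hπ : Function.Surjective π := by
    rw [← LinearMap.range_eq_top, hπdef, Fintype.range_linearCombination, hsgen]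
  obtain ⟨lam, hlam⟩ := Module.projective_lifting_property q π Z.mkQ_surjective
  have hlam' : ∀ a, q (lam a) = π a := fun a => LinearMap.congr_fun hlam a
  set Ω := LinearMap.ker π with hΩdef
  have hμmem : ∀ w : Ω, lam w.1 ∈ Z := by
    intro w
    have h1 : q (lam w.1) = 0 := by rw [hlam']; exact w.2
    rwa [hqdef, Submodule.mkQ_apply, Submodule.Quotient.mk_eq_zero] at h1
  set μ : Ω →ₗ[A] Z := LinearMap.codRestrict Z (lam.comp Ω.subtype) (fun w => hμmem w) with hμdef
  have hiμ : ∀ w : Ω, i (μ w) = lam w.1 := fun w => rfl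
  haveI := HR.submodule_pi_projective hhered n Ω
  have hpsurj : Function.Surjective p := f.surjective_rangeRestrict
  obtain ⟨ν, hν⟩ := Module.projective_lifting_property p μ hpsurj
  have hνa : ∀ w, p (ν w) = μ w := fun w => LinearMap.congr_fun hν w
  -- the pushout E
  set R : Submodule A (Y × (Fin n → A)) :=
    LinearMap.range (LinearMap.prod ν (-Ω.subtype)) with hRdef
  set mk : (Y × (Fin n → A)) →ₗ[A] ((Y × (Fin n → A)) ⧸ R) := R.mkQ with hmkdef
  set j : Y →ₗ[A] ((Y × (Fin n → A)) ⧸ R) := mk.comp (LinearMap.inl A Y (Fin n → A)) with hjdef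
  have hφ0 : R ≤ LinearMap.ker
      (i.comp (p.comp (LinearMap.fst A Y (Fin n → A)))
        + lam.comp (LinearMap.snd A Y (Fin n → A))) := by
    rintro _ ⟨w, rfl⟩
    simp only [LinearMap.mem_ker, LinearMap.add_apply, LinearMap.comp_apply,
      LinearMap.prod_apply, Pi.prod, Function.prod_apply, LinearMap.fst_apply, LinearMap.snd_apply,
      LinearMap.neg_apply, map_neg]
    rw [hνa, hiμ]
    simp
  set φ : ((Y × (Fin n → A)) ⧸ R) →ₗ[A] X := R.liftQ _ hφ0 with hφdef
  have hφmk : ∀ (y : Y) (a : Fin n → A), φ (mk (y, a)) = i (p y) + lam a := by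
    intro y a
    rw [hφdef, hmkdef, Submodule.mkQ_apply, Submodule.liftQ_apply]
    rfl
  have hφj : ∀ y, φ (j y) = i (p y) := by
    intro y
    rw [hjdef]
    simpa using hφmk y 0
  -- j is injective
  have hjinj : Function.Injective j := by
    rw [← LinearMap.ker_eq_bot]
    rw [Submodule.eq_bot_iff]
    intro y hy
    rw [LinearMap.mem_ker, hjdef, LinearMap.comp_apply, hmkdef, Submodule.mkQ_apply,
      Submodule.Quotient.mk_eq_zero] at hy
    obtain ⟨w, hw⟩ := hy
    have hw2 : -(w : Fin n → A) = 0 := congrArg Prod.snd hw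
    have hw0 : w = 0 := by
      ext1
      simpa [neg_eq_zero] using hw2
    have hw1 : ν w = y := congrArg Prod.fst hw
    rw [hw0] at hw1
    simpa using hw1.symm
  -- elements of the kernel of φ with explicit representative
  have hrep : ∀ e : ((Y × (Fin n → A)) ⧸ R), ∃ y a, e = mk (y, a) := by
    intro e
    obtain ⟨⟨y, a⟩, hya⟩ := Submodule.mkQ_surjective R e
    exact ⟨y, a, hya.symm⟩
  have hmk_omega : ∀ (y : Y) (w : Ω), mk (y, (w : Fin n → A)) = j (y + ν w) := by
    intro y w
    rw [hjdef]
    simp only [LinearMap.comp_apply, LinearMap.inl_apply]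
    rw [hmkdef, Submodule.mkQ_apply, Submodule.mkQ_apply, Submodule.Quotient.eq]
    exact ⟨-w, by simp⟩
  -- the exact sequence 0 → Y → Z × E → X → 0
  set α : Y →ₗ[A] (Z × ((Y × (Fin n → A)) ⧸ R)) := LinearMap.prod p j with hαdef
  set β : (Z × ((Y × (Fin n → A)) ⧸ R)) →ₗ[A] X :=
    i.comp (LinearMap.fst A _ _) - φ.comp (LinearMap.snd A _ _) with hβdef
  have hβ : ∀ z e, β (z, e) = i z - φ e := fun z e => rfl
  have hαinj : Function.Injective α := by
    intro y₁ y₂ h12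
    have := congrArg Prod.snd h12
    exact hjinj this
  have hβsurj : Function.Surjective β := by
    intro x
    obtain ⟨a, ha⟩ := hπ (q x)
    have hmem : x - lam a ∈ Z := by
      have : q (x - lam a) = 0 := by
        rw [map_sub, hlam', ha, sub_self]
      rwa [hqdef, Submodule.mkQ_apply, Submodule.Quotient.mk_eq_zero] at this
    refine ⟨(⟨x - lam a, hmem⟩, mk (0, -a)), ?_⟩
    rw [hβ, hφmk]
    simp [hidef]
  have hrange : LinearMap.range α = LinearMap.ker β := by
    apply le_antisymm
    · rintro _ ⟨y, rfl⟩
      rw [LinearMap.mem_ker, hαdef]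
      simp only [LinearMap.prod_apply, Pi.prod, Function.prod_apply]
      rw [hβ, hφj, sub_self]
    · rintro ⟨z, e⟩ hze
      rw [LinearMap.mem_ker, hβ] at hze
      obtain ⟨y, a, rfl⟩ := hrep e
      rw [hφmk] at hze
      have hze' : i z = i (p y) + lam a := by rwa [sub_eq_zero] at hze
      have haΩ : a ∈ Ω := by
        have h1 := congrArg q hze'
        rw [map_add, hqi, hqi, hlam', zero_add] at h1
        exact LinearMap.mem_ker.mpr h1.symm
      have he : mk (y, a) = j (y + ν ⟨a, haΩ⟩) := hmk_omega y ⟨a, haΩ⟩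
      have hz : z = p (y + ν ⟨a, haΩ⟩) := by
        have h2 : i z = i (p (y + ν ⟨a, haΩ⟩)) := by
          rw [hze', map_add p y, hνa, map_add, hiμ]
        exact Subtype.ext h2
      refine ⟨y + ν ⟨a, haΩ⟩, ?_⟩
      rw [hαdef]
      simp only [LinearMap.prod_apply, Pi.prod, Function.prod_apply]
      rw [← hz, ← he]
  -- apply the Ext vanishing hypothesis
  obtain ⟨sp, hsp⟩ := hext (Z × ((Y × (Fin n → A)) ⧸ R)) α β hαinj hβsurj hrange
  have hsp' : ∀ x, β (sp x) = x := fun x => LinearMap.congr_fun hsp x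
  set s₁ : X →ₗ[A] Z := (LinearMap.fst A _ _).comp sp with hs1def
  set s₂ : X →ₗ[A] ((Y × (Fin n → A)) ⧸ R) := (LinearMap.snd A _ _).comp sp with hs2def
  have hs12 : ∀ x, i (s₁ x) - φ (s₂ x) = x := by
    intro x
    exact hsp' x
  rcases HR.local_endo (k := k) hX (i.comp s₁) with hbij | hbij
  · -- then `i` is surjective, so `f` is surjective: contradiction
    apply hnsurj
    intro x
    obtain ⟨x', hx'⟩ := hbij.2 x
    have hz2 : i (s₁ x') = x := hx'
    obtain ⟨y, hy⟩ := (s₁ x').2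
    exact ⟨y, by rw [hy]; exact hz2⟩
  · -- then `φ ∘ s₂` is bijective
    have hu : Function.Bijective (φ.comp s₂) := by
      have hneg : ∀ x, ((LinearMap.id : X →ₗ[A] X) - i.comp s₁) x = -((φ.comp s₂) x) := by
        intro x
        simp only [LinearMap.sub_apply, LinearMap.id_apply, LinearMap.comp_apply]
        calc x - i (s₁ x) = (i (s₁ x) - φ (s₂ x)) - i (s₁ x) := by rw [hs12 x]
          _ = -(φ (s₂ x)) := by abel
      constructor
      · intro a b hab
        apply hbij.1
        rw [hneg, hneg, hab]
      · intro x
        obtain ⟨y, hy⟩ := hbij.2 (-x)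
        refine ⟨y, ?_⟩
        rw [hneg] at hy
        have := congrArg Neg.neg hy
        simpa using this
    set c : X →ₗ[A] X := (LinearEquiv.ofBijective (φ.comp s₂) hu).symm.toLinearMap with hcdef
    have hφσ : ∀ x, φ (s₂ (c x)) = x := by
      intro x
      exact (LinearEquiv.ofBijective (φ.comp s₂) hu).apply_symm_apply x
    set σ : X →ₗ[A] ((Y × (Fin n → A)) ⧸ R) := s₂.comp c with hσdef
    have hφσ' : ∀ x, φ (σ x) = x := hφσ
    have hσinj : Function.Injective σ := by
      intro a b hab
      rw [← hφσ' a, ← hφσ' b, hab]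
    set r : Y →ₗ[A] ((Y × (Fin n → A)) ⧸ R) := j - σ.comp (φ.comp j) with hrdef
    have hrapp : ∀ y, r y = j y - σ (φ (j y)) := fun y => rfl
    have hφr : ∀ y, φ (r y) = 0 := by
      intro y
      rw [hrapp, map_sub, hφσ', sub_self]
    have hrrange : ∀ y, r y ∈ LinearMap.range j := by
      intro y
      obtain ⟨y', a, hrep'⟩ := hrep (r y)
      have h0 : i (p y') + lam a = 0 := by
        rw [← hφmk, ← hrep']
        exact hφr y
      have haΩ : a ∈ Ω := by
        have h1 := congrArg q h0
        rw [map_add, hqi, hlam', zero_add, map_zero] at h1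
        exact LinearMap.mem_ker.mpr h1
      refine ⟨y' + ν ⟨a, haΩ⟩, ?_⟩
      rw [← hmk_omega y' ⟨a, haΩ⟩]
      exact hrep'.symm
    set eJ : Y ≃ₗ[A] LinearMap.range j := LinearEquiv.ofInjective j hjinj with heJdef
    have heJ : ∀ y, (eJ y : ((Y × (Fin n → A)) ⧸ R)) = j y := by
      intro y
      rw [heJdef]
      rfl
    set g : Y →ₗ[A] Y :=
      eJ.symm.toLinearMap.comp (r.codRestrict (LinearMap.range j) hrrange) with hgdef
    have hjg : ∀ y, j (g y) = r y := by
      intro y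
      have h1 : eJ (g y) = ⟨r y, hrrange y⟩ := by
        rw [hgdef]
        exact eJ.apply_symm_apply _
      have h2 := congrArg (Subtype.val) h1
      rw [heJ] at h2
      exact h2
    have hgg : ∀ y, g (g y) = g y := by
      intro y
      apply hjinj
      rw [hjg, hjg, hrapp (g y), hjg, hφr, map_zero, sub_zero]
    have hcompl : IsCompl (LinearMap.ker g) (LinearMap.range g) := by
      constructor
      · rw [Submodule.disjoint_def]
        rintro x hx1 ⟨y, rfl⟩
        rw [LinearMap.mem_ker] at hx1
        exact (hgg y).symm.trans hx1
      · rw [codisjoint_iff, eq_top_iff]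
        rintro y -
        rw [Submodule.mem_sup]
        refine ⟨y - g y, ?_, g y, ⟨y, rfl⟩, by abel⟩
        rw [LinearMap.mem_ker, map_sub, hgg, sub_self]
    rcases hY.2 _ _ hcompl with hker | hrg
    · -- `g` is injective, hence the identity; this forces `f = 0`
      have hginj : Function.Injective g := by
        rw [← LinearMap.ker_eq_bot] at *
        exact hker
      have hgid : ∀ y, g y = y := fun y => hginj (hgg y)
      apply hf
      ext y
      have h1 : j y = r y := by rw [← hjg y, hgid]
      rw [hrapp] at h1
      have h2 : σ (φ (j y)) = 0 := sub_eq_self.mp h1.symm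
      have h3 : φ (j y) = 0 := by
        apply hσinj
        rw [h2, map_zero]
      rw [hφj] at h3
      have h4 : p y = 0 := Subtype.ext h3
      show f y = 0
      rw [← hip y, h4, map_zero]
    · -- `g = 0`, which forces `f` to be injective
      apply hninj
      have hg0 : ∀ y, g y = 0 := by
        intro y
        have hm : g y ∈ LinearMap.range g := ⟨y, rfl⟩
        rw [hrg] at hm
        simpa using hm
      have hjσ : ∀ y, j y = σ (i (p y)) := by
        intro y
        have h1 : r y = 0 := by rw [← hjg y, hg0, map_zero]
        rw [hrapp] at h1
        have h2 := sub_eq_zero.mp h1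
        rw [hφj] at h2
        exact h2
      intro y₁ y₂ h12
      apply hjinj
      rw [hjσ, hjσ, hip, hip, h12]

end Aux

/-- Happel–Ringel: over a finite dimensional hereditary algebra, if `X`, `Y` are
indecomposable and `Ext¹(X,Y) = 0`, every nonzero map `Y → X` is injective or surjective;
in particular the endomorphism ring of an exceptional module is a division algebra. -/
theorem statement16 (k : Type) [Field k] (A : Type) [Ring A] [Algebra k A]
    [FiniteDimensional k A]
    (hhered : ∀ I : Submodule A A, Module.Projective A I)
    (X Y : Type) [AddCommGroup X] [Module A X] [AddCommGroup Y] [Module A Y]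
    [Module k X] [IsScalarTower k A X] [FiniteDimensional k X]
    [Module k Y] [IsScalarTower k A Y] [FiniteDimensional k Y]
    (hX : Indecomposable' A X) (hY : Indecomposable' A Y)
    (hext : Ext1Zero A X Y) :
    (∀ f : Y →ₗ[A] X, f ≠ 0 → Function.Injective f ∨ Function.Surjective f) ∧
    (Ext1Zero A X X → ∀ f : X →ₗ[A] X, f ≠ 0 → Function.Bijective f) := by
  constructor
  · exact fun f hf => HR.key k A hhered X Y hX hY hext f hf
  · intro hXX f hf
    haveI : IsNoetherian A X := isNoetherian_of_tower k inferInstance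
    haveI : IsArtinian A X := isArtinian_of_tower k inferInstance
    rcases HR.key k A hhered X X hX hX hXX f hf with h | h
    · exact IsArtinian.bijective_of_injective_endomorphism f h
    · exact IsNoetherian.bijective_of_surjective_endomorphism f h
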